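/- Let n ≥ 1, j ∈ ℕ and M, m ∈ ℝ. If Φ_{n,j+1}(x) ≤ M·Φ_{n,j}(x) for all x ∈ [0,1], then Φ_{n,j+2}(x) ≤ M·Φ_{n,j+1}(x) for all x ∈ [0,1]. Analogously, if Φ_{n,j+1}(x) ≥ m·Φ_{n,j}(x) for all x ∈ [0,1], then Φ_{n,j+2}(x) ≥ m·Φ_{n,j+1}(x) for all x ∈ [0,1]. In particular, the maxima M_{n,j} of Φ_{n,j+1}/Φ_{n,j} on [0,1] are nonincreasing in j, and the minima m_{n,j} are nondecreasing in j. -/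

import Mathlib

open Real MeasureTheory Filter

noncomputable section

/-- The perturbing sequence: `c j = 1` if `n ∣ j`, else `0`. -/
def pert (n j : ℕ) : ℕ := if n ∣ j then 1 else 0

/-- The lacunary trigonometric product `Π_{r,γ}(α) = ∏_{j<r} |cos(2^j α π + γ_j π/2)|`. -/
def PiProd (r : ℕ) (γ : ℕ → ℕ) (α : ℝ) : ℝ :=
  ∏ j ∈ Finset.range r, |Real.cos (2 ^ j * α * π + γ j * π / 2)|

/-- The functions `Φ_{n,j}` defined recursively by `Φ_{n,0} = 1` and
`Φ_{n,j+1}(x) = 2^{-n} Σ_{k<2^n} Π_{n,c}((x+k)/2^n) · Φ_{n,j}((x+k)/2^n)`. -/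
def Phi (n : ℕ) : ℕ → ℝ → ℝ
  | 0, _ => 1
  | j + 1, x => ((2:ℝ) ^ n)⁻¹ * ∑ k ∈ Finset.range (2 ^ n),
      PiProd n (pert n) ((x + k) / 2 ^ n) * Phi n j ((x + k) / 2 ^ n)

lemma PiProd_nonneg (r : ℕ) (γ : ℕ → ℕ) (α : ℝ) : 0 ≤ PiProd r γ α :=
  Finset.prod_nonneg fun _ _ => abs_nonneg _

lemma arg_mem (n : ℕ) {x : ℝ} (hx : x ∈ Set.Icc (0:ℝ) 1) {k : ℕ} (hk : k ∈ Finset.range (2^n)) :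
    (x + k) / 2 ^ n ∈ Set.Icc (0:ℝ) 1 := by
  have h2 : (0:ℝ) < 2 ^ n := by positivity
  have hk' : (k:ℝ) ≤ 2 ^ n - 1 := by
    have := Finset.mem_range.mp hk
    have : (k:ℝ) + 1 ≤ 2 ^ n := by exact_mod_cast this
    linarith
  constructor
  · apply div_nonneg _ h2.le
    have := hx.1; positivity
  · rw [div_le_one h2]; have := hx.2; linarith

lemma pert_zero (n : ℕ) : pert n 0 = 1 := by simp [pert]

lemma pert_pos (n j : ℕ) (h0 : 0 < j) (hj : j < n) : pert n j = 0 := by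
  have : ¬ n ∣ j := fun h => absurd (Nat.le_of_dvd h0 h) (not_le.mpr hj)
  simp [pert, this]

lemma PiProd_pos_half (n : ℕ) (hn : 1 ≤ n) : 0 < PiProd n (pert n) (1/2) := by
  apply Finset.prod_pos
  intro j hj
  rw [abs_pos]
  rcases Nat.eq_zero_or_pos j with rfl | hj0
  · rw [show (2:ℝ)^(0:ℕ) * (1/2) * π + (pert n 0 : ℝ) * π / 2 = π by
      rw [pert_zero]; push_cast; ring]
    rw [Real.cos_pi]; norm_num
  · rw [pert_pos n j hj0 (Finset.mem_range.mp hj)]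
    intro h
    rw [Real.cos_eq_zero_iff] at h
    obtain ⟨k, hk⟩ := h
    obtain ⟨i, rfl⟩ := Nat.exists_eq_add_of_le hj0
    have hpi : π ≠ 0 := Real.pi_ne_zero
    rw [show (2:ℝ) ^ (1 + i) * (1/2) * π + ((0:ℕ):ℝ) * π / 2 = 2^i * π by push_cast; ring] at hk
    have h2 : (2:ℝ) * 2^i = 2*k+1 := mul_right_cancel₀ hpi (by linarith)
    have h3 : (2:ℤ) * 2^i = 2*k+1 := by exact_mod_cast h2
    obtain ⟨m, hm⟩ : ∃ m : ℤ, (2:ℤ)^i = m := ⟨_, rfl⟩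
    rw [hm] at h3; omega

lemma PiProd_pos_small (n : ℕ) (hn : 1 ≤ n) {x : ℝ} (h0 : 0 < x) (h1 : x < 1) :
    0 < PiProd n (pert n) (x / 2 ^ n) := by
  apply Finset.prod_pos
  intro j hj
  have hjn := Finset.mem_range.mp hj
  rw [abs_pos]
  have h2n : (0:ℝ) < 2 ^ n := by positivity
  rcases Nat.eq_zero_or_pos j with rfl | hj0
  · rw [pert_zero]
    have hpos : 0 < x / 2^n * π := by positivity
    have hlt : x / 2^n < 1/2 := by
      rw [div_lt_iff₀ h2n]
      have h2le : (2:ℝ) ≤ 2^n := by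
        calc (2:ℝ) = 2^1 := by norm_num
        _ ≤ 2^n := by apply pow_le_pow_right₀ (by norm_num) hn
      nlinarith
    have hang1 : π/2 < (2:ℝ)^(0:ℕ) * (x / 2^n) * π + (1:ℕ) * π / 2 := by
      push_cast; nlinarith
    have hang2 : (2:ℝ)^(0:ℕ) * (x / 2^n) * π + (1:ℕ) * π / 2 < π + π/2 := by
      push_cast; nlinarith [Real.pi_pos]
    exact (Real.cos_neg_of_pi_div_two_lt_of_lt hang1 hang2).ne
  · rw [pert_pos n j hj0 hjn]
    have hlt : (2:ℝ)^j * (x / 2^n) < 1/2 := by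
      have hle : (2:ℝ)^j * 2 ≤ 2^n := by
        calc (2:ℝ)^j * 2 = 2^(j+1) := by ring
        _ ≤ 2^n := by apply pow_le_pow_right₀ (by norm_num) hjn
      rw [mul_div_assoc', div_lt_iff₀ h2n]
      nlinarith [pow_pos (two_pos (α := ℝ)) j]
    have hpos : 0 < (2:ℝ)^j * (x / 2^n) * π := by positivity
    have hang1 : -(π/2) < (2:ℝ)^j * (x / 2^n) * π + ((0:ℕ):ℝ) * π / 2 := by
      push_cast; nlinarith [Real.pi_pos]
    have hang2 : (2:ℝ)^j * (x / 2^n) * π + ((0:ℕ):ℝ) * π / 2 < π/2 := by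
      push_cast; nlinarith [Real.pi_pos]
    exact (Real.cos_pos_of_mem_Ioo ⟨hang1, hang2⟩).ne'

lemma exists_pos_term (n : ℕ) (hn : 1 ≤ n) {x : ℝ} (hx : x ∈ Set.Icc (0:ℝ) 1) :
    ∃ k ∈ Finset.range (2^n), 0 < PiProd n (pert n) ((x + k) / 2 ^ n) := by
  have h1 : 1 ≤ 2^(n-1) := Nat.one_le_two_pow
  have hlt : 2^(n-1) < 2^n := Nat.pow_lt_pow_right one_lt_two (by omega)
  have key : ((2:ℝ)^(n-1)) * 2 = 2^n := by
    rw [← pow_succ]; congr 1; omega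
  have h2n : (0:ℝ) < 2^n := by positivity
  rcases eq_or_lt_of_le hx.1 with h0 | h0
  · refine ⟨2^(n-1), Finset.mem_range.mpr hlt, ?_⟩
    have hval : (x + ((2^(n-1):ℕ):ℝ)) / 2^n = 1/2 := by
      rw [← h0]; push_cast
      rw [div_eq_div_iff h2n.ne' two_ne_zero]; linarith
    rw [hval]; exact PiProd_pos_half n hn
  rcases eq_or_lt_of_le hx.2 with h1' | h1'
  · refine ⟨2^(n-1)-1, Finset.mem_range.mpr (by omega), ?_⟩
    have hval : (x + ((2^(n-1)-1:ℕ):ℝ)) / 2^n = 1/2 := by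
      rw [h1', Nat.cast_sub h1]; push_cast
      rw [div_eq_div_iff h2n.ne' two_ne_zero]; linarith
    rw [hval]; exact PiProd_pos_half n hn
  · exact ⟨0, Finset.mem_range.mpr (by positivity),
      by simpa using PiProd_pos_small n hn h0 h1'⟩

end

noncomputable section
lemma Phi_pos (n : ℕ) (hn : 1 ≤ n) : ∀ i, ∀ x ∈ Set.Icc (0:ℝ) 1, 0 < Phi n i x := by
  intro i
  induction i with
  | zero => intro x _; simp [Phi]
  | succ i ih =>
    intro x hx
    rw [Phi]
    apply mul_pos (by positivity)
    obtain ⟨k, hk, hkpos⟩ := exists_pos_term n hn hx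
    exact Finset.sum_pos'
      (fun l hl => mul_nonneg (PiProd_nonneg _ _ _) (ih _ (arg_mem n hx hl)).le)
      ⟨k, hk, mul_pos hkpos (ih _ (arg_mem n hx hk))⟩

lemma PiProd_continuous (r : ℕ) (γ : ℕ → ℕ) : Continuous (PiProd r γ) := by
  apply continuous_finset_prod
  intro j _
  exact ((Real.continuous_cos.comp (by continuity)).abs)

lemma Phi_continuous (n : ℕ) : ∀ i, Continuous (Phi n i) := by
  intro i
  induction i with
  | zero => exact continuous_const
  | succ i ih =>
    have : Phi n (i+1) = fun x => ((2:ℝ) ^ n)⁻¹ * ∑ k ∈ Finset.range (2 ^ n),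
        PiProd n (pert n) ((x + k) / 2 ^ n) * Phi n i ((x + k) / 2 ^ n) := rfl
    rw [this]
    apply continuous_const.mul
    apply continuous_finset_sum
    intro k _
    exact ((PiProd_continuous n (pert n)).comp (by continuity)).mul (ih.comp (by continuity))

lemma Phi_step_le (n : ℕ) (j : ℕ) (M : ℝ)
    (h : ∀ x ∈ Set.Icc (0:ℝ) 1, Phi n (j + 1) x ≤ M * Phi n j x) :
    ∀ x ∈ Set.Icc (0:ℝ) 1, Phi n (j + 2) x ≤ M * Phi n (j + 1) x := by
  intro x hx
  have h2n : (0:ℝ) < (2:ℝ)^n := by positivity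
  have e1 : Phi n (j + 2) x = ((2:ℝ) ^ n)⁻¹ * ∑ k ∈ Finset.range (2 ^ n),
      PiProd n (pert n) ((x + k) / 2 ^ n) * Phi n (j+1) ((x + k) / 2 ^ n) := rfl
  have e2 : Phi n (j + 1) x = ((2:ℝ) ^ n)⁻¹ * ∑ k ∈ Finset.range (2 ^ n),
      PiProd n (pert n) ((x + k) / 2 ^ n) * Phi n j ((x + k) / 2 ^ n) := rfl
  have e3 : ∑ k ∈ Finset.range (2^n), PiProd n (pert n) ((x+k)/2^n) * (M * Phi n j ((x+k)/2^n))
      = M * ∑ k ∈ Finset.range (2^n), PiProd n (pert n) ((x+k)/2^n) * Phi n j ((x+k)/2^n) := by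
    rw [Finset.mul_sum]; exact Finset.sum_congr rfl fun k _ => by ring
  calc Phi n (j+2) x
      = ((2:ℝ) ^ n)⁻¹ * ∑ k ∈ Finset.range (2 ^ n),
        PiProd n (pert n) ((x + k) / 2 ^ n) * Phi n (j+1) ((x + k) / 2 ^ n) := e1
    _ ≤ ((2:ℝ) ^ n)⁻¹ * ∑ k ∈ Finset.range (2 ^ n),
        PiProd n (pert n) ((x + k) / 2 ^ n) * (M * Phi n j ((x + k) / 2 ^ n)) := by
        apply mul_le_mul_of_nonneg_left _ (by positivity)
        exact Finset.sum_le_sum fun k hk =>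
          mul_le_mul_of_nonneg_left (h _ (arg_mem n hx hk)) (PiProd_nonneg _ _ _)
    _ = M * Phi n (j+1) x := by rw [e3, e2]; ring

lemma Phi_step_ge (n : ℕ) (j : ℕ) (m : ℝ)
    (h : ∀ x ∈ Set.Icc (0:ℝ) 1, m * Phi n j x ≤ Phi n (j + 1) x) :
    ∀ x ∈ Set.Icc (0:ℝ) 1, m * Phi n (j + 1) x ≤ Phi n (j + 2) x := by
  intro x hx
  have e1 : Phi n (j + 2) x = ((2:ℝ) ^ n)⁻¹ * ∑ k ∈ Finset.range (2 ^ n),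
      PiProd n (pert n) ((x + k) / 2 ^ n) * Phi n (j+1) ((x + k) / 2 ^ n) := rfl
  have e2 : Phi n (j + 1) x = ((2:ℝ) ^ n)⁻¹ * ∑ k ∈ Finset.range (2 ^ n),
      PiProd n (pert n) ((x + k) / 2 ^ n) * Phi n j ((x + k) / 2 ^ n) := rfl
  have e3 : ∑ k ∈ Finset.range (2^n), PiProd n (pert n) ((x+k)/2^n) * (m * Phi n j ((x+k)/2^n))
      = m * ∑ k ∈ Finset.range (2^n), PiProd n (pert n) ((x+k)/2^n) * Phi n j ((x+k)/2^n) := by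
    rw [Finset.mul_sum]; exact Finset.sum_congr rfl fun k _ => by ring
  calc m * Phi n (j+1) x
      = ((2:ℝ) ^ n)⁻¹ * ∑ k ∈ Finset.range (2 ^ n),
        PiProd n (pert n) ((x + k) / 2 ^ n) * (m * Phi n j ((x + k) / 2 ^ n)) := by
        rw [e3, e2]; ring
    _ ≤ ((2:ℝ) ^ n)⁻¹ * ∑ k ∈ Finset.range (2 ^ n),
        PiProd n (pert n) ((x + k) / 2 ^ n) * Phi n (j+1) ((x + k) / 2 ^ n) := by
        apply mul_le_mul_of_nonneg_left _ (by positivity)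
        exact Finset.sum_le_sum fun k hk =>
          mul_le_mul_of_nonneg_left (h _ (arg_mem n hx hk)) (PiProd_nonneg _ _ _)
    _ = Phi n (j+2) x := e1.symm

/-- Monotonicity of the ratios `Φ_{n,j+1}/Φ_{n,j}`: an upper bound `M` (resp. a lower
bound `m`) for the ratio at level `j` persists at level `j+1`; in particular the maxima
`M_{n,j}` of `Φ_{n,j+1}/Φ_{n,j}` on `[0,1]` are nonincreasing in `j` and the minima
`m_{n,j}` are nondecreasing in `j`. -/
theorem Phi_ratio_monotone (n : ℕ) (hn : 1 ≤ n) (j : ℕ) (M m : ℝ) :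
    ((∀ x ∈ Set.Icc (0:ℝ) 1, Phi n (j + 1) x ≤ M * Phi n j x) →
      ∀ x ∈ Set.Icc (0:ℝ) 1, Phi n (j + 2) x ≤ M * Phi n (j + 1) x) ∧
    ((∀ x ∈ Set.Icc (0:ℝ) 1, m * Phi n j x ≤ Phi n (j + 1) x) →
      ∀ x ∈ Set.Icc (0:ℝ) 1, m * Phi n (j + 1) x ≤ Phi n (j + 2) x) ∧
    (∀ i : ℕ, sSup ((fun x => Phi n (i + 2) x / Phi n (i + 1) x) '' Set.Icc (0:ℝ) 1) ≤
      sSup ((fun x => Phi n (i + 1) x / Phi n i x) '' Set.Icc (0:ℝ) 1)) ∧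
    (∀ i : ℕ, sInf ((fun x => Phi n (i + 1) x / Phi n i x) '' Set.Icc (0:ℝ) 1) ≤
      sInf ((fun x => Phi n (i + 2) x / Phi n (i + 1) x) '' Set.Icc (0:ℝ) 1)) := by
  have h01 : (0:ℝ) ∈ Set.Icc (0:ℝ) 1 := by norm_num
  refine ⟨Phi_step_le n j M, Phi_step_ge n j m, ?_, ?_⟩
  · intro i
    have hcont : ContinuousOn (fun x => Phi n (i + 1) x / Phi n i x) (Set.Icc (0:ℝ) 1) :=
      ((Phi_continuous n (i+1)).continuousOn).div ((Phi_continuous n i).continuousOn)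
        (fun x hx => (Phi_pos n hn i x hx).ne')
    obtain ⟨x₀, hx₀, hmax⟩ := (isCompact_Icc).exists_isMaxOn ⟨0, h01⟩ hcont
    set M₀ := Phi n (i + 1) x₀ / Phi n i x₀ with hM₀
    have hub : ∀ y ∈ (fun x => Phi n (i + 1) x / Phi n i x) '' Set.Icc (0:ℝ) 1, y ≤ M₀ := by
      rintro y ⟨x, hx, rfl⟩; exact hmax hx
    have hne : ((fun x => Phi n (i + 1) x / Phi n i x) '' Set.Icc (0:ℝ) 1).Nonempty :=
      ⟨_, 0, h01, rfl⟩
    have hsup : sSup ((fun x => Phi n (i + 1) x / Phi n i x) '' Set.Icc (0:ℝ) 1) = M₀ :=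
      le_antisymm (csSup_le hne hub) (le_csSup ⟨M₀, hub⟩ ⟨x₀, hx₀, rfl⟩)
    have hpt : ∀ x ∈ Set.Icc (0:ℝ) 1, Phi n (i + 1) x ≤ M₀ * Phi n i x := fun x hx =>
      (div_le_iff₀ (Phi_pos n hn i x hx)).mp (hmax hx)
    have hstep := Phi_step_le n i M₀ hpt
    rw [hsup]
    refine csSup_le ⟨_, 0, h01, rfl⟩ ?_
    rintro y ⟨x, hx, rfl⟩
    exact (div_le_iff₀ (Phi_pos n hn (i+1) x hx)).mpr (hstep x hx)
  · intro i
    have hcont : ContinuousOn (fun x => Phi n (i + 1) x / Phi n i x) (Set.Icc (0:ℝ) 1) :=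
      ((Phi_continuous n (i+1)).continuousOn).div ((Phi_continuous n i).continuousOn)
        (fun x hx => (Phi_pos n hn i x hx).ne')
    obtain ⟨x₀, hx₀, hmin⟩ := (isCompact_Icc).exists_isMinOn ⟨0, h01⟩ hcont
    set m₀ := Phi n (i + 1) x₀ / Phi n i x₀ with hm₀
    have hlb : ∀ y ∈ (fun x => Phi n (i + 1) x / Phi n i x) '' Set.Icc (0:ℝ) 1, m₀ ≤ y := by
      rintro y ⟨x, hx, rfl⟩; exact hmin hx
    have hinf : sInf ((fun x => Phi n (i + 1) x / Phi n i x) '' Set.Icc (0:ℝ) 1) = m₀ :=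
      le_antisymm (csInf_le ⟨m₀, hlb⟩ ⟨x₀, hx₀, rfl⟩) (le_csInf ⟨_, 0, h01, rfl⟩ hlb)
    have hpt : ∀ x ∈ Set.Icc (0:ℝ) 1, m₀ * Phi n i x ≤ Phi n (i + 1) x := fun x hx => by
      have := (le_div_iff₀ (Phi_pos n hn i x hx)).mp (hmin hx)
      linarith [this]
    have hstep := Phi_step_ge n i m₀ hpt
    rw [hinf]
    refine le_csInf ⟨_, 0, h01, rfl⟩ ?_
    rintro y ⟨x, hx, rfl⟩
    rw [le_div_iff₀ (Phi_pos n hn (i+1) x hx)]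
    linarith [hstep x hx]

end
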